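/- Let W ⊆ ℝ^d be a convex set containing an open neighborhood of 0, let P, Q be probability measures, and let g be a bounded measurable feature map. Define JS_g(P,Q) = sup_{w ∈ W} [E_P log sigmoid(⟨w, g(X)⟩) + E_Q log(1 − sigmoid(⟨w, g(X)⟩))] + log 4. Then JS_g(P,Q) = 0 if and only if E_P g(X) = E_Q g(X). -/

import Mathlib

open MeasureTheory

noncomputable def sigmoid (t : ℝ) : ℝ := 1 / (1 + Real.exp (-t))

lemma one_add_exp_pos (t : ℝ) : 0 < 1 + Real.exp t := by positivity

lemma sigmoid_pos (t : ℝ) : 0 < sigmoid t := by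
  unfold sigmoid; positivity

lemma sigmoid_lt_one (t : ℝ) : sigmoid t < 1 := by
  unfold sigmoid
  rw [div_lt_one (one_add_exp_pos _)]
  linarith [Real.exp_pos (-t)]

lemma one_sub_sigmoid (t : ℝ) : 1 - sigmoid t = sigmoid (-t) := by
  unfold sigmoid
  rw [neg_neg, eq_div_iff (one_add_exp_pos t).ne']
  field_simp
  have h : Real.exp (-t) * Real.exp t = 1 := by
    rw [← Real.exp_add, neg_add_cancel, Real.exp_zero]
  linear_combination h

noncomputable def phi (t : ℝ) : ℝ := Real.log (sigmoid t)

lemma phi_eq (t : ℝ) : phi t = -Real.log (1 + Real.exp (-t)) := by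
  unfold phi sigmoid
  rw [one_div, Real.log_inv]

lemma hasDerivAt_phi (t : ℝ) : HasDerivAt phi (sigmoid (-t)) t := by
  have h1 : HasDerivAt (fun s : ℝ => 1 + Real.exp (-s)) (-Real.exp (-t)) t := by
    have := (Real.hasDerivAt_exp (-t)).comp t (hasDerivAt_neg t)
    simpa using (this.const_add 1)
  have h2 := (h1.log (one_add_exp_pos (-t)).ne')
  have h3 := h2.neg
  have : phi = fun s => -Real.log (1 + Real.exp (-s)) := funext phi_eq
  rw [this]
  refine h3.congr_deriv (Eq.symm ?_)
  unfold sigmoid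
  rw [neg_neg, neg_div, neg_neg, Real.exp_neg]
  rw [div_eq_div_iff (one_add_exp_pos t).ne' (by positivity)]
  field_simp
  ring

lemma sigmoid_neg_eq (t : ℝ) : sigmoid (-t) = (1 + Real.exp t)⁻¹ := by
  unfold sigmoid; rw [neg_neg, one_div]

lemma hasDerivAt_sigmoid_neg (t : ℝ) :
    HasDerivAt (fun s : ℝ => sigmoid (-s)) (-(Real.exp t / (1 + Real.exp t) ^ 2)) t := by
  have h1 : HasDerivAt (fun s : ℝ => 1 + Real.exp s) (Real.exp t) t := by
    simpa using (Real.hasDerivAt_exp t).const_add 1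
  have h2 := h1.inv (one_add_exp_pos t).ne'
  have : (fun s : ℝ => sigmoid (-s)) = fun s => (1 + Real.exp s)⁻¹ :=
    funext sigmoid_neg_eq
  rw [this]
  exact (by simpa [neg_div] using h2 :
    HasDerivAt (fun s : ℝ => 1 + Real.exp s)⁻¹ (-(Real.exp t / (1 + Real.exp t) ^ 2)) t)

lemma phi_concave : ConcaveOn ℝ Set.univ phi := by
  apply concaveOn_of_hasDerivWithinAt2_nonpos (f' := fun t => sigmoid (-t))
    (f'' := fun t => -(Real.exp t / (1 + Real.exp t) ^ 2)) convex_univ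
  · exact fun t _ => (hasDerivAt_phi t).continuousAt.continuousWithinAt
  · exact fun t _ => (hasDerivAt_phi t).hasDerivWithinAt
  · exact fun t _ => (hasDerivAt_sigmoid_neg t).hasDerivWithinAt
  · intro t _
    have : 0 < Real.exp t / (1 + Real.exp t) ^ 2 := by positivity
    linarith

/-- tangent line inequality for the concave function `phi`. -/
lemma phi_tangent (s t : ℝ) : phi t ≤ phi s + sigmoid (-s) * (t - s) := by
  rcases lt_trichotomy t s with h | h | h
  · have := phi_concave.le_slope_of_hasDerivAt (Set.mem_univ t) (Set.mem_univ s) h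
      (hasDerivAt_phi s)
    rw [slope_def_field] at this
    rw [le_div_iff₀ (show (0:ℝ) < s - t by linarith)] at this
    linarith
  · subst h; simp
  · have := phi_concave.slope_le_of_hasDerivAt (Set.mem_univ s) (Set.mem_univ t) h
      (hasDerivAt_phi s)
    rw [slope_def_field] at this
    have hts : 0 < t - s := by linarith
    rw [div_le_iff₀ hts] at this
    linarith

lemma phi_nonpos (t : ℝ) : phi t ≤ 0 :=
  Real.log_nonpos (sigmoid_pos t).le (sigmoid_lt_one t).le

lemma sigmoid_zero : sigmoid 0 = 1 / 2 := by
  unfold sigmoid; norm_num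

lemma phi_zero : phi 0 = -Real.log 2 := by
  unfold phi
  rw [sigmoid_zero, one_div, Real.log_inv]

lemma log_four : Real.log 4 = 2 * Real.log 2 := by
  rw [show (4:ℝ) = 2 ^ 2 by norm_num, Real.log_pow]
  push_cast; ring

lemma phi_add_phi_neg (s : ℝ) : phi s + phi (-s) ≤ -Real.log 4 := by
  unfold phi
  rw [← Real.log_mul (sigmoid_pos s).ne' (sigmoid_pos (-s)).ne']
  have h1 : sigmoid s * sigmoid (-s) ≤ 1 / 4 := by
    rw [← one_sub_sigmoid]
    nlinarith [sq_nonneg (2 * sigmoid s - 1)]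
  calc Real.log (sigmoid s * sigmoid (-s)) ≤ Real.log (1 / 4) :=
        Real.log_le_log (mul_pos (sigmoid_pos s) (sigmoid_pos (-s))) h1
    _ = -Real.log 4 := by rw [one_div, Real.log_inv]

lemma abs_phi_le {A t : ℝ} (ht : |t| ≤ A) : |phi t| ≤ Real.log (1 + Real.exp A) := by
  rw [phi_eq, abs_neg, abs_of_nonneg (Real.log_nonneg (by linarith [Real.exp_pos (-t)]))]
  apply Real.log_le_log (by positivity)
  have : Real.exp (-t) ≤ Real.exp A := Real.exp_le_exp.2 (by cases abs_le.1 ht; linarith)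
  linarith

lemma continuous_phi : Continuous phi := by
  have : phi = fun s => -Real.log (1 + Real.exp (-s)) := funext phi_eq
  rw [this]
  have hc : Continuous fun s : ℝ => 1 + Real.exp (-s) := by continuity
  exact (hc.log fun x => (one_add_exp_pos (-x)).ne').neg

lemma phi_def (t : ℝ) : Real.log (sigmoid t) = phi t := rfl

lemma continuous_sigmoid' : Continuous sigmoid := by
  unfold sigmoid
  exact continuous_const.div (by continuity) fun x => (one_add_exp_pos (-x)).ne'

lemma abs_sigmoid_le (t : ℝ) : |sigmoid t| ≤ 1 :=
  abs_le.2 ⟨by linarith [sigmoid_pos t], (sigmoid_lt_one t).le⟩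

lemma phi_two_zero : phi 0 + phi 0 = -Real.log 4 := by
  rw [phi_zero, log_four]; ring

/-- `JS_g(P,Q) = 0` iff `E_P g = E_Q g`, for a convex `W` containing a
neighborhood of `0`. -/
theorem restricted_js_zero_iff_moment_match
    {Ω : Type*} [MeasurableSpace Ω] {d : ℕ}
    (P Q : Measure Ω) [IsProbabilityMeasure P] [IsProbabilityMeasure Q]
    (g : Ω → EuclideanSpace ℝ (Fin d)) (hg : Measurable g)
    (C : ℝ) (hgb : ∀ x, ‖g x‖ ≤ C)
    (W : Set (EuclideanSpace ℝ (Fin d))) (hW : Convex ℝ W)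
    (hW0 : W ∈ nhds (0 : EuclideanSpace ℝ (Fin d))) :
    (sSup {y : ℝ | ∃ w ∈ W, y =
        (∫ x, Real.log (sigmoid (inner ℝ w (g x))) ∂P) +
        (∫ x, Real.log (1 - sigmoid (inner ℝ w (g x))) ∂Q)} + Real.log 4 = 0)
    ↔ (∫ x, g x ∂P) = (∫ x, g x ∂Q) := by
  simp only [one_sub_sigmoid, phi_def]
  -- basic measurability / integrability facts
  have hgaes : AEStronglyMeasurable g P := hg.aestronglyMeasurable
  have hgiP : Integrable g P :=
    (integrable_const C).mono' hg.aestronglyMeasurable (Filter.Eventually.of_forall hgb)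
  have hgiQ : Integrable g Q :=
    (integrable_const C).mono' hg.aestronglyMeasurable (Filter.Eventually.of_forall hgb)
  have hinner : ∀ w : EuclideanSpace ℝ (Fin d),
      Measurable fun x => (inner ℝ w (g x) : ℝ) := by
    intro w
    exact ((innerSL ℝ w).continuous.measurable).comp hg
  have hbnd : ∀ (w : EuclideanSpace ℝ (Fin d)) x, |(inner ℝ w (g x) : ℝ)| ≤ ‖w‖ * C := by
    intro w x
    refine (abs_real_inner_le_norm w (g x)).trans ?_
    exact mul_le_mul_of_nonneg_left (hgb x) (norm_nonneg w)
  have hinnerInt : ∀ (μ : Measure Ω) [IsProbabilityMeasure μ]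
      (w : EuclideanSpace ℝ (Fin d)), Integrable (fun x => (inner ℝ w (g x) : ℝ)) μ := by
    intro μ _ w
    refine (integrable_const (‖w‖ * C)).mono' (hinner w).aestronglyMeasurable ?_
    exact Filter.Eventually.of_forall fun x => by
      simpa [Real.norm_eq_abs] using hbnd w x
  have hphiInt : ∀ (μ : Measure Ω) [IsProbabilityMeasure μ] (a : ℝ)
      (w : EuclideanSpace ℝ (Fin d)),
      Integrable (fun x => phi (a * (inner ℝ w (g x) : ℝ))) μ := by
    intro μ _ a w
    refine (integrable_const (Real.log (1 + Real.exp (|a| * (‖w‖ * C))))).mono'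
      ((continuous_phi.measurable.comp ((hinner w).const_mul a)).aestronglyMeasurable) ?_
    refine Filter.Eventually.of_forall fun x => ?_
    rw [Real.norm_eq_abs]
    refine abs_phi_le ?_
    rw [abs_mul]
    exact mul_le_mul_of_nonneg_left (hbnd w x) (abs_nonneg a)
  have hphiInt1 : ∀ (μ : Measure Ω) [IsProbabilityMeasure μ]
      (w : EuclideanSpace ℝ (Fin d)),
      Integrable (fun x => phi (inner ℝ w (g x) : ℝ)) μ := by
    intro μ _ w; simpa using hphiInt μ 1 w
  have hphiIntNeg : ∀ (μ : Measure Ω) [IsProbabilityMeasure μ]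
      (w : EuclideanSpace ℝ (Fin d)),
      Integrable (fun x => phi (-(inner ℝ w (g x) : ℝ))) μ := by
    intro μ _ w; simpa using hphiInt μ (-1) w
  set S : Set ℝ := {y : ℝ | ∃ w ∈ W, y =
      (∫ x, phi (inner ℝ w (g x)) ∂P) + (∫ x, phi (-(inner ℝ w (g x))) ∂Q)} with hS
  have h0W : (0 : EuclideanSpace ℝ (Fin d)) ∈ W := mem_of_mem_nhds hW0
  have hF0 : (∫ x, phi (inner ℝ (0 : EuclideanSpace ℝ (Fin d)) (g x)) ∂P)
      + (∫ x, phi (-(inner ℝ (0 : EuclideanSpace ℝ (Fin d)) (g x))) ∂Q) = -Real.log 4 := by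
    simp only [inner_zero_left, neg_zero]
    rw [integral_const, integral_const]
    simp [phi_two_zero, ← phi_two_zero]
  have hmem0 : -Real.log 4 ∈ S := ⟨0, h0W, hF0.symm⟩
  have hne : S.Nonempty := ⟨_, hmem0⟩
  have hub : ∀ y ∈ S, y ≤ 0 := by
    rintro y ⟨w, -, rfl⟩
    have h1 : (∫ x, phi (inner ℝ w (g x)) ∂P) ≤ 0 :=
      integral_nonpos fun x => phi_nonpos _
    have h2 : (∫ x, phi (-(inner ℝ w (g x))) ∂Q) ≤ 0 :=
      integral_nonpos fun x => phi_nonpos _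
    linarith
  have hbdd : BddAbove S := ⟨0, hub⟩
  constructor
  · -- forward direction
    intro hsum
    by_contra hne'
    set v : EuclideanSpace ℝ (Fin d) := (∫ x, g x ∂P) - (∫ x, g x ∂Q) with hv
    have hv0 : v ≠ 0 := sub_ne_zero.2 hne'
    set c : Ω → ℝ := fun x => inner ℝ v (g x) with hc
    -- derivative of t ↦ ∫ phi (t * c x) ∂P at 0
    have hder : ∀ (μ : Measure Ω) [IsProbabilityMeasure μ],
        HasDerivAt (fun t : ℝ => ∫ x, phi (t * c x) ∂μ)
          (∫ x, sigmoid 0 * c x ∂μ) 0 := by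
      intro μ _
      have := hasDerivAt_integral_of_dominated_loc_of_deriv_le
        (F := fun (t : ℝ) (x : Ω) => phi (t * c x))
        (F' := fun (t : ℝ) (x : Ω) => sigmoid (-(t * c x)) * c x)
        (x₀ := 0) (bound := fun _ => ‖v‖ * C) (μ := μ) (s := Metric.ball 0 1) (Metric.ball_mem_nhds 0 one_pos)
        (Filter.Eventually.of_forall fun t =>
          ((continuous_phi.measurable.comp ((hinner v).const_mul t)).aestronglyMeasurable))
        (hphiInt μ 0 v)
        (((continuous_sigmoid'.measurable.comp
            (((hinner v).const_mul (0:ℝ)).neg)).mul (hinner v)).aestronglyMeasurable)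
        (Filter.Eventually.of_forall fun x => fun t _ => by
          rw [Real.norm_eq_abs, abs_mul]
          calc |sigmoid (-(t * c x))| * |c x| ≤ 1 * |c x| :=
                mul_le_mul_of_nonneg_right (abs_sigmoid_le _) (abs_nonneg _)
            _ = |c x| := one_mul _
            _ ≤ ‖v‖ * C := hbnd v x)
        (integrable_const _)
        (Filter.Eventually.of_forall fun x => fun t _ => by
          have h1 : HasDerivAt (fun t : ℝ => t * c x) (c x) t := by
            simpa using (hasDerivAt_id t).mul_const (c x)
          have h2 := (hasDerivAt_phi (t * c x)).comp t h1
          exact h2)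
      refine this.2.congr_deriv ?_
      norm_num
    have hderP := hder P
    have hderQ' : HasDerivAt (fun t : ℝ => ∫ x, phi (-(t * c x)) ∂Q)
        (∫ x, -(sigmoid 0 * c x) ∂Q) 0 := by
      have key := hasDerivAt_integral_of_dominated_loc_of_deriv_le
        (F := fun (t : ℝ) (x : Ω) => phi (-(t * c x)))
        (F' := fun (t : ℝ) (x : Ω) => -(sigmoid (t * c x) * c x))
        (x₀ := 0) (bound := fun _ => ‖v‖ * C) (μ := Q) (s := Metric.ball 0 1) (Metric.ball_mem_nhds 0 one_pos)
        (Filter.Eventually.of_forall fun t =>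
          ((continuous_phi.measurable.comp (((hinner v).const_mul t).neg)).aestronglyMeasurable))
        (by simpa [neg_mul] using hphiInt Q 0 v)
        (((continuous_sigmoid'.measurable.comp
            ((hinner v).const_mul (0:ℝ))).mul (hinner v)).neg.aestronglyMeasurable)
        (Filter.Eventually.of_forall fun x => fun t _ => by
          rw [Real.norm_eq_abs, abs_neg, abs_mul]
          calc |sigmoid (t * c x)| * |c x| ≤ 1 * |c x| :=
                mul_le_mul_of_nonneg_right (abs_sigmoid_le _) (abs_nonneg _)
            _ = |c x| := one_mul _
            _ ≤ ‖v‖ * C := hbnd v x)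
        (integrable_const _)
        (Filter.Eventually.of_forall fun x => fun t _ => by
          have h1 : HasDerivAt (fun t : ℝ => -(t * c x)) (-(c x)) t := by
            exact ((hasDerivAt_id t).mul_const (c x)).neg.congr_deriv (by simp)
          have := (hasDerivAt_phi (-(t * c x))).comp t h1
          refine this.congr_deriv ?_
          rw [neg_neg]; ring)
      refine key.2.congr_deriv ?_
      norm_num
    have hD : HasDerivAt (fun t : ℝ =>
        (∫ x, phi (t * c x) ∂P) + (∫ x, phi (-(t * c x)) ∂Q))
        ((1/2) * (inner ℝ v v : ℝ)) 0 := by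
      have := hderP.add hderQ'
      refine this.congr_deriv (Eq.symm ?_)
      rw [integral_neg]
      have e1 : ∀ (μ : Measure Ω), (∫ x, sigmoid 0 * c x ∂μ) = (1/2) * ∫ x, c x ∂μ := by
        intro μ; rw [integral_const_mul, sigmoid_zero]
      rw [e1, e1]
      have e2 : (∫ x, c x ∂P) = inner ℝ v (∫ x, g x ∂P) := integral_inner hgiP v
      have e3 : (∫ x, c x ∂Q) = inner ℝ v (∫ x, g x ∂Q) := integral_inner hgiQ v
      rw [e2, e3, hv, inner_sub_right]
      ring
    have hDpos : 0 < (1/2) * (inner ℝ v v : ℝ) := by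
      have h1 : (inner ℝ v v : ℝ) = ‖v‖ ^ 2 := real_inner_self_eq_norm_sq v
      have h2 : 0 < ‖v‖ := norm_pos_iff.2 hv0
      rw [h1]; positivity
    -- get a point t > 0 with h t > h 0
    set hfun : ℝ → ℝ := fun t =>
      (∫ x, phi (t * c x) ∂P) + (∫ x, phi (-(t * c x)) ∂Q) with hhfun
    have hslope : Filter.Tendsto (slope hfun 0) (nhdsWithin 0 {(0:ℝ)}ᶜ)
        (nhds ((1/2) * (inner ℝ v v : ℝ))) := hasDerivAt_iff_tendsto_slope.1 hD
    have hev1 : ∀ᶠ t in nhdsWithin 0 (Set.Ioi 0), 0 < slope hfun 0 t := by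
      have : ∀ᶠ t in nhdsWithin 0 {(0:ℝ)}ᶜ, 0 < slope hfun 0 t :=
        hslope.eventually (eventually_gt_nhds hDpos)
      exact this.filter_mono (nhdsWithin_mono _ fun x hx => ne_of_gt hx)
    have hev2 : ∀ᶠ t : ℝ in nhdsWithin 0 (Set.Ioi (0:ℝ)),
        t • v ∈ W := by
      have ht : Filter.Tendsto (fun t : ℝ => t • v) (nhds 0) (nhds 0) := by
        have : Filter.Tendsto (fun t : ℝ => t • v) (nhds 0) (nhds ((0:ℝ) • v)) :=
          (continuous_id.smul continuous_const).tendsto 0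
        simpa using this
      exact (ht.eventually_mem hW0).filter_mono nhdsWithin_le_nhds
    have hev3 : ∀ᶠ t : ℝ in nhdsWithin 0 (Set.Ioi (0:ℝ)), t ∈ Set.Ioi (0:ℝ) :=
      self_mem_nhdsWithin
    obtain ⟨t, ⟨⟨ht1, ht2⟩, ht3⟩⟩ := ((hev1.and hev2).and hev3).exists
    have htpos : (0:ℝ) < t := ht3
    have hgt : hfun 0 < hfun t := by
      rw [slope_def_field] at ht1
      have : 0 < (hfun t - hfun 0) / (t - 0) := ht1
      rw [sub_zero] at this
      rcases div_pos_iff.mp this with ⟨h1, _⟩ | ⟨_, h2⟩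
      · linarith
      · linarith
    have hh0 : hfun 0 = -Real.log 4 := by
      have : hfun 0 = (∫ x, phi ((0:ℝ) * c x) ∂P) + (∫ x, phi (-((0:ℝ) * c x)) ∂Q) := rfl
      rw [this]
      simp only [zero_mul, neg_zero]
      rw [integral_const, integral_const]
      simp [phi_two_zero, ← phi_two_zero]
    have hmemt : hfun t ∈ S := by
      refine ⟨t • v, ht2, ?_⟩
      have e : ∀ x, (inner ℝ (t • v) (g x) : ℝ) = t * c x := fun x =>
        real_inner_smul_left v (g x) t
      simp only [hhfun, e]
    have hle : hfun t ≤ sSup S := le_csSup hbdd hmemt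
    have : sSup S = -Real.log 4 := by linarith [hsum]
    rw [this, ← hh0] at hle
    linarith
  · -- reverse direction
    intro hm
    have hupper : ∀ y ∈ S, y ≤ -Real.log 4 := by
      rintro y ⟨w, hwW, rfl⟩
      set m : EuclideanSpace ℝ (Fin d) := ∫ x, g x ∂P with hm'
      set s : ℝ := inner ℝ w m with hs'
      have hsP : (∫ x, (inner ℝ w (g x) : ℝ) ∂P) = s := integral_inner hgiP w
      have hsQ : (∫ x, (inner ℝ w (g x) : ℝ) ∂Q) = s := by
        rw [integral_inner hgiQ w, ← hm]
      have key1 : (∫ x, phi (inner ℝ w (g x)) ∂P) ≤ phi s := by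
        have hle : ∀ x, phi (inner ℝ w (g x)) ≤
            phi s + sigmoid (-s) * ((inner ℝ w (g x) : ℝ) - s) := fun x => phi_tangent s _
        have hsub : Integrable (fun x => (inner ℝ w (g x) : ℝ) - s) P := by
          exact (hinnerInt P w).sub (integrable_const s)
        have hmul : Integrable
            (fun x => sigmoid (-s) * ((inner ℝ w (g x) : ℝ) - s)) P := hsub.const_mul _
        have hint2 : Integrable
            (fun x => phi s + sigmoid (-s) * ((inner ℝ w (g x) : ℝ) - s)) P := by
          simpa using (integrable_const (phi s)).add hmul
        calc (∫ x, phi (inner ℝ w (g x)) ∂P)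
            ≤ ∫ x, phi s + sigmoid (-s) * ((inner ℝ w (g x) : ℝ) - s) ∂P :=
              integral_mono (hphiInt1 P w) hint2 hle
          _ = phi s := by
              rw [integral_add (integrable_const _) hmul,
                integral_const_mul, integral_sub (hinnerInt P w) (integrable_const s),
                hsP, integral_const, integral_const]
              simp
      have key2 : (∫ x, phi (-(inner ℝ w (g x))) ∂Q) ≤ phi (-s) := by
        have hle : ∀ x, phi (-(inner ℝ w (g x))) ≤
            phi (-s) + sigmoid s * (s - (inner ℝ w (g x) : ℝ)) := by
          intro x
          have := phi_tangent (-s) (-(inner ℝ w (g x) : ℝ))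
          rw [neg_neg] at this
          calc phi (-(inner ℝ w (g x) : ℝ)) ≤
              phi (-s) + sigmoid s * (-(inner ℝ w (g x) : ℝ) - -s) := this
            _ = phi (-s) + sigmoid s * (s - (inner ℝ w (g x) : ℝ)) := by ring
        have hsub : Integrable (fun x => s - (inner ℝ w (g x) : ℝ)) Q := by
          exact (integrable_const s).sub (hinnerInt Q w)
        have hmul : Integrable
            (fun x => sigmoid s * (s - (inner ℝ w (g x) : ℝ))) Q := hsub.const_mul _
        have hint2 : Integrable
            (fun x => phi (-s) + sigmoid s * (s - (inner ℝ w (g x) : ℝ))) Q := by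
          simpa using (integrable_const (phi (-s))).add hmul
        calc (∫ x, phi (-(inner ℝ w (g x))) ∂Q)
            ≤ ∫ x, phi (-s) + sigmoid s * (s - (inner ℝ w (g x) : ℝ)) ∂Q :=
              integral_mono (hphiIntNeg Q w) hint2 hle
          _ = phi (-s) := by
              rw [integral_add (integrable_const _) hmul,
                integral_const_mul, integral_sub (integrable_const s) (hinnerInt Q w),
                hsQ, integral_const, integral_const]
              simp
      calc (∫ x, phi (inner ℝ w (g x)) ∂P) + (∫ x, phi (-(inner ℝ w (g x))) ∂Q)
          ≤ phi s + phi (-s) := add_le_add key1 key2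
        _ ≤ -Real.log 4 := phi_add_phi_neg s
    have : sSup S = -Real.log 4 :=
      le_antisymm (csSup_le hne hupper) (le_csSup hbdd hmem0)
    rw [this]
    ring
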